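/- When data arrivals form an ON–OFF discrete-time Markov-modulated Poisson process, the minimum energy per bit for confidential message transmission to receiver 1 satisfies lim_{snr→0⁺} (δ·P(z1 ≥ z2)·snr)/r_avg(snr) = (e^{θ} − 1)·P(z1 ≥ z2)·log_e 2 / (θ·E[(z1 − z2)·1{z1 ≥ z2}]); in particular it exceeds the constant-rate value by the factor (e^{θ} − 1)/θ and grows with the QoS exponent θ. -/

import Mathlib

open MeasureTheory ProbabilityTheory Filter Set Topology

private lemma ptwise_aux (δ θ a b : ℝ) (hδ : 0 < δ) (hb : 0 ≤ b) (hba : b ≤ a) :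
    Tendsto (fun s : ℝ => (1 - Real.exp (-θ * Real.logb 2 ((1 + δ * s * a) / (1 + δ * s * b)))) / s)
      (nhdsWithin 0 (Set.Ioi 0)) (nhds (θ * δ * (a - b) / Real.log 2)) := by
  have ha : 0 ≤ a := le_trans hb hba
  set G : ℝ → ℝ := fun s => 1 - Real.exp (-θ * ((Real.log (1 + δ * s * a) - Real.log (1 + δ * s * b)) / Real.log 2)) with hG
  have hA : HasDerivAt (fun s : ℝ => 1 + δ * s * a) (δ * a) 0 := by
    have h0 : (fun s : ℝ => 1 + δ * s * a) = fun s => δ * a * s + 1 := by funext s; ring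
    rw [h0]
    simpa using ((hasDerivAt_id (0:ℝ)).const_mul (δ * a)).add_const 1
  have hB : HasDerivAt (fun s : ℝ => 1 + δ * s * b) (δ * b) 0 := by
    have h0 : (fun s : ℝ => 1 + δ * s * b) = fun s => δ * b * s + 1 := by funext s; ring
    rw [h0]
    simpa using ((hasDerivAt_id (0:ℝ)).const_mul (δ * b)).add_const 1
  have hlogA : HasDerivAt (fun s : ℝ => Real.log (1 + δ * s * a)) (δ * a) 0 := by
    simpa using hA.log (by norm_num)
  have hlogB : HasDerivAt (fun s : ℝ => Real.log (1 + δ * s * b)) (δ * b) 0 := by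
    simpa using hB.log (by norm_num)
  have hsub := (hlogA.sub hlogB).div_const (Real.log 2)
  have hmul := hsub.const_mul (-θ)
  have hexp := hmul.exp
  have hGd : HasDerivAt G (θ * δ * (a - b) / Real.log 2) 0 := by
    have h := hexp.const_sub 1
    have hval : -(Real.exp (-θ * ((Real.log (1+δ*0*a) - Real.log (1+δ*0*b)) / Real.log 2)) *
        (-θ * ((δ * a - δ * b) / Real.log 2))) = θ * δ * (a - b) / Real.log 2 := by
      norm_num; ring
    rw [hG]
    exact h.congr_deriv hval
  have hev : (fun s : ℝ => 1 - Real.exp (-θ * Real.logb 2 ((1 + δ * s * a) / (1 + δ * s * b)))) =ᶠ[nhds (0:ℝ)] G := by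
    have hε : 0 < 1 / (δ * (a + 1)) := by positivity
    filter_upwards [Metric.ball_mem_nhds (0:ℝ) hε] with s hs
    rw [Metric.mem_ball, Real.dist_eq, sub_zero] at hs
    have hsa : |δ * s * a| < 1 := by
      have habs : |δ * s * a| = δ * |s| * a := by
        rw [abs_mul, abs_mul, abs_of_nonneg hδ.le, abs_of_nonneg ha]
      rcases eq_or_lt_of_le ha with h | h
      · rw [habs, ← h]; norm_num
      rw [habs]
      have h1 : δ * |s| * a < δ * (1 / (δ * (a + 1))) * a := by
        have := mul_lt_mul_of_pos_left hs hδ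
        exact mul_lt_mul_of_pos_right this h
      have h2 : δ * (1 / (δ * (a + 1))) * a = a / (a + 1) := by
        field_simp
      rw [h2] at h1
      exact h1.trans_le (by rw [div_le_one (by linarith)]; linarith)
    have hsb : |δ * s * b| < 1 := by
      refine lt_of_le_of_lt ?_ hsa
      rw [abs_mul, abs_mul, abs_mul, abs_mul, abs_of_nonneg hb, abs_of_nonneg ha]
      exact mul_le_mul_of_nonneg_left hba (by positivity)
    have hpa : 0 < 1 + δ * s * a := by
      have := neg_lt_of_abs_lt hsa; linarith
    have hpb : 0 < 1 + δ * s * b := by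
      have := neg_lt_of_abs_lt hsb; linarith
    simp only [hG]
    rw [Real.logb, Real.log_div (ne_of_gt hpa) (ne_of_gt hpb)]
  have hGd2 : HasDerivAt (fun s : ℝ => 1 - Real.exp (-θ * Real.logb 2 ((1 + δ * s * a) / (1 + δ * s * b))))
      (θ * δ * (a - b) / Real.log 2) 0 := hGd.congr_of_eventuallyEq hev
  have hslope := (hasDerivAt_iff_tendsto_slope.mp hGd2).mono_left
    (nhdsWithin_mono 0 (fun x hx => ne_of_gt hx : Set.Ioi (0:ℝ) ⊆ {(0:ℝ)}ᶜ))
  refine hslope.congr (fun s => ?_)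
  simp [slope_def_field, div_eq_mul_inv]

private lemma hslope_aux (p11 p22 : ℝ) (hp11 : p11 ∈ Set.Ioo (0:ℝ) 1) (hp22 : p22 ∈ Set.Ioo (0:ℝ) 1) :
    Tendsto (fun g : ℝ => Real.log ((1 - p11 * g) / ((1 - p11 - p22) * g ^ 2 + p22 * g)) / (1 - g))
      (nhdsWithin 1 (Set.Iio 1)) (nhds ((2 - p11 - p22) / (1 - p11))) := by
  obtain ⟨hp110, hp111⟩ := hp11
  obtain ⟨hp220, hp221⟩ := hp22
  set h : ℝ → ℝ := fun g => Real.log ((1 - p11 * g) / ((1 - p11 - p22) * g ^ 2 + p22 * g)) with hh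
  have h1p : (0:ℝ) < 1 - p11 := by linarith
  have hu : HasDerivAt (fun g : ℝ => 1 - p11 * g) (-p11) 1 := by
    simpa using ((hasDerivAt_id (1:ℝ)).const_mul p11).const_sub 1
  have hv : HasDerivAt (fun g : ℝ => (1 - p11 - p22) * g ^ 2 + p22 * g)
      ((1 - p11 - p22) * 2 + p22) 1 := by
    have := ((hasDerivAt_pow 2 (1:ℝ)).const_mul (1 - p11 - p22)).add
      ((hasDerivAt_id (1:ℝ)).const_mul p22)
    exact this.congr_deriv (by norm_num)
  have hv1 : ((1 - p11 - p22) * (1:ℝ) ^ 2 + p22 * 1) ≠ 0 := by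
    norm_num; linarith
  have hq := hu.div hv hv1
  have hq1 : ((1 - p11 * 1) / ((1 - p11 - p22) * (1:ℝ) ^ 2 + p22 * 1)) ≠ 0 := by
    norm_num
    intro hc; linarith
  have hd : HasDerivAt h ((p11 + p22 - 2) / (1 - p11)) 1 := by
    have := hq.log hq1
    refine this.congr_deriv ?_
    symm
    norm_num
    rw [div_self (ne_of_gt h1p), div_one,
      div_eq_div_iff (ne_of_gt h1p) (ne_of_gt (pow_pos h1p 2))]
    ring
  have hslope := (hasDerivAt_iff_tendsto_slope.mp hd).mono_left
    (nhdsWithin_mono 1 (fun x hx => ne_of_lt hx : Set.Iio (1:ℝ) ⊆ {(1:ℝ)}ᶜ))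
  have hlim : Tendsto (fun g => -slope h 1 g) (nhdsWithin 1 (Set.Iio 1))
      (nhds (-((p11 + p22 - 2) / (1 - p11)))) := hslope.neg
  have heq : -((p11 + p22 - 2) / (1 - p11)) = (2 - p11 - p22) / (1 - p11) := by ring
  rw [heq] at hlim
  refine hlim.congr (fun g => ?_)
  have hh1 : h 1 = 0 := by
    show Real.log _ = 0
    rw [show (1 - p11 * (1:ℝ)) / ((1 - p11 - p22) * (1:ℝ) ^ 2 + p22 * 1) = 1 by
      rw [div_eq_one_iff_eq hv1]; ring, Real.log_one]
  show -slope h 1 g = h g / (1 - g)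
  rw [slope_def_field, hh1, sub_zero, show (1:ℝ) - g = -(g - 1) by ring, div_neg]

private lemma strict_mono_aux : StrictMonoOn (fun t : ℝ => (Real.exp t - 1) / t) (Set.Ioi 0) := by
  have key : ∀ x ∈ interior (Set.Ioi (0:ℝ)), 0 < deriv (fun t : ℝ => (Real.exp t - 1) / t) x := by
    intro x hx
    rw [interior_Ioi] at hx
    have hx0 : x ≠ 0 := ne_of_gt hx
    have hd : HasDerivAt (fun t : ℝ => (Real.exp t - 1) / t)
        ((Real.exp x * x - (Real.exp x - 1) * 1) / x ^ 2) x :=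
      ((Real.hasDerivAt_exp x).sub_const 1).div (hasDerivAt_id x) hx0
    rw [hd.deriv]
    have h1 : 1 - x < Real.exp (-x) := by
      have := Real.add_one_lt_exp (x := -x) (by simpa using hx0)
      linarith
    have h2 : Real.exp (-x) * Real.exp x = 1 := by
      rw [← Real.exp_add]; simp
    have hex : 0 < Real.exp x := Real.exp_pos x
    have h3 : (1 - x) * Real.exp x < 1 := by
      calc (1 - x) * Real.exp x < Real.exp (-x) * Real.exp x :=
            mul_lt_mul_of_pos_right h1 hex
        _ = 1 := h2
    have hnum : 0 < Real.exp x * x - (Real.exp x - 1) * 1 := by nlinarith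
    positivity
  exact StrictMonoOn.mono (strictMonoOn_of_deriv_pos (convex_Ioi 0)
    (ContinuousOn.div (by fun_prop) continuousOn_id (fun x hx => ne_of_gt hx)) key)
    (by simp [Set.Ioi_subset_Ici_iff])

theorem minimum_energy_per_bit_confidential_discrete_MMPP
    {Ω : Type*} [MeasurableSpace Ω] (μ : Measure Ω) [IsProbabilityMeasure μ]
    (z1 z2 : Ω → ℝ) (hz1m : Measurable z1) (hz2m : Measurable z2)
    (hz1nn : ∀ ω, 0 ≤ z1 ω) (hz2nn : ∀ ω, 0 ≤ z2 ω)
    (M : ℝ) (hz1b : ∀ ω, z1 ω ≤ M) (hz2b : ∀ ω, z2 ω ≤ M)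
    (hpos : 0 < (μ {ω | z2 ω < z1 ω}).toReal)
    (θ δ p11 p22 : ℝ) (hθ : 0 < θ) (hδ0 : 0 < δ) (hδ1 : δ ≤ 1)
    (hp11 : p11 ∈ Set.Ioo (0 : ℝ) 1) (hp22 : p22 ∈ Set.Ioo (0 : ℝ) 1)
    (Pon : ℝ) (hPon : Pon = (1 - p11) / (2 - p11 - p22))
    (R1 : ℝ → Ω → ℝ)
    (hR1 : ∀ snr ω, R1 snr ω =
      if z2 ω ≤ z1 ω then
        Real.logb 2 ((1 + δ * snr * z1 ω) / (1 + δ * snr * z2 ω)) else 0)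
    (g1 : ℝ → ℝ) (hg1 : ∀ snr, g1 snr = ∫ ω, Real.exp (-θ * R1 snr ω) ∂μ)
    (ravg : ℝ → ℝ)
    (hravg : ∀ snr, ravg snr = (Pon / (Real.exp θ - 1)) * Real.log
      ((1 - p11 * g1 snr) / ((1 - p11 - p22) * (g1 snr) ^ 2 + p22 * g1 snr))) :
    Filter.Tendsto
      (fun snr => (δ * (μ {ω | z2 ω ≤ z1 ω}).toReal * snr) / ravg snr)
      (nhdsWithin 0 (Set.Ioi 0))
      (nhds ((Real.exp θ - 1) * (μ {ω | z2 ω ≤ z1 ω}).toReal * Real.log 2 /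
        (θ * ∫ ω, (if z2 ω ≤ z1 ω then z1 ω - z2 ω else 0) ∂μ))) ∧
    (Real.exp θ - 1) * (μ {ω | z2 ω ≤ z1 ω}).toReal * Real.log 2 /
        (θ * ∫ ω, (if z2 ω ≤ z1 ω then z1 ω - z2 ω else 0) ∂μ)
      = ((Real.exp θ - 1) / θ) *
        ((μ {ω | z2 ω ≤ z1 ω}).toReal * Real.log 2 /
          ∫ ω, (if z2 ω ≤ z1 ω then z1 ω - z2 ω else 0) ∂μ) ∧
    1 < (Real.exp θ - 1) / θ ∧
    StrictMonoOn (fun t : ℝ => (Real.exp t - 1) / t) (Set.Ioi 0) := by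
  have hlog2 : (0:ℝ) < Real.log 2 := Real.log_pos one_lt_two
  have hexpθ : (0:ℝ) < Real.exp θ - 1 := by
    have := Real.exp_lt_exp.mpr hθ
    simp only [Real.exp_zero] at this
    linarith
  set P : ℝ := (μ {ω | z2 ω ≤ z1 ω}).toReal with hP
  set E : ℝ := ∫ ω, (if z2 ω ≤ z1 ω then z1 ω - z2 ω else 0) ∂μ with hE
  have hS'pos : 0 < μ {ω | z2 ω < z1 ω} := by
    rcases eq_or_lt_of_le (zero_le : 0 ≤ μ {ω | z2 ω < z1 ω}) with h | h
    · rw [← h] at hpos; simp at hpos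
    · exact h
  have hM0 : 0 ≤ M := by
    obtain ⟨ω₀, _⟩ := nonempty_of_measure_ne_zero (ne_of_gt hS'pos)
    exact le_trans (hz1nn ω₀) (hz1b ω₀)
  -- measurability of R1
  have hR1meas : ∀ s, Measurable (R1 s) := by
    intro s
    have hfe : R1 s = fun ω => if z2 ω ≤ z1 ω then
        Real.log ((1 + δ * s * z1 ω) / (1 + δ * s * z2 ω)) / Real.log 2 else 0 := by
      funext ω; rw [hR1]; simp [Real.logb]
    rw [hfe]
    exact Measurable.ite (measurableSet_le hz2m hz1m)
      ((Real.measurable_log.comp (((hz1m.const_mul (δ * s)).const_add 1).div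
        ((hz2m.const_mul (δ * s)).const_add 1))).div_const _) measurable_const
  -- nonnegativity and upper bound of R1 for s ≥ 0
  have hR1nn : ∀ s : ℝ, 0 ≤ s → ∀ ω, 0 ≤ R1 s ω := by
    intro s hs ω
    have hδs : (0:ℝ) ≤ δ * s := mul_nonneg hδ0.le hs
    have hq0 : 0 ≤ δ * s * z2 ω := mul_nonneg hδs (hz2nn ω)
    rw [hR1]
    split_ifs with hc
    · refine Real.logb_nonneg one_lt_two ?_
      rw [le_div_iff₀ (by linarith)]
      have : δ * s * z2 ω ≤ δ * s * z1 ω := mul_le_mul_of_nonneg_left hc hδs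
      linarith
    · exact le_refl _
  have hR1ub : ∀ s : ℝ, 0 < s → ∀ ω, R1 s ω ≤ δ * s * M / Real.log 2 := by
    intro s hs ω
    have hδs : (0:ℝ) ≤ δ * s := mul_nonneg hδ0.le hs.le
    have hq0 : 0 ≤ δ * s * z2 ω := mul_nonneg hδs (hz2nn ω)
    have hδsM : 0 ≤ δ * s * M := mul_nonneg hδs hM0
    rw [hR1]
    split_ifs with hc
    · have hqp : δ * s * z2 ω ≤ δ * s * z1 ω := mul_le_mul_of_nonneg_left hc hδs
      have hQpos : 0 < (1 + δ * s * z1 ω) / (1 + δ * s * z2 ω) := by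
        apply div_pos <;> linarith
      have hlogQ : Real.log ((1 + δ * s * z1 ω) / (1 + δ * s * z2 ω))
          ≤ δ * s * z1 ω - δ * s * z2 ω := by
        have h1 := Real.log_le_sub_one_of_pos hQpos
        have h2 : (1 + δ * s * z1 ω) / (1 + δ * s * z2 ω) - 1
            = (δ * s * z1 ω - δ * s * z2 ω) / (1 + δ * s * z2 ω) := by
          field_simp
          ring
        have h3 : (δ * s * z1 ω - δ * s * z2 ω) / (1 + δ * s * z2 ω)
            ≤ δ * s * z1 ω - δ * s * z2 ω :=
          div_le_self (by linarith) (by linarith)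
        linarith
      have h4 : δ * s * z1 ω - δ * s * z2 ω ≤ δ * s * M := by
        have := mul_le_mul_of_nonneg_left
          (show z1 ω - z2 ω ≤ M by linarith [hz1b ω, hz2nn ω]) hδs
        nlinarith
      rw [Real.logb]
      gcongr
      linarith
    · positivity
  -- integrability of exp(-θ R1)
  have hexpmeas : ∀ s, Measurable (fun ω => Real.exp (-θ * R1 s ω)) :=
    fun s => ((hR1meas s).const_mul (-θ)).exp
  have hexple1 : ∀ s : ℝ, 0 ≤ s → ∀ ω, Real.exp (-θ * R1 s ω) ≤ 1 := by
    intro s hs ω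
    rw [Real.exp_le_one_iff]
    have := hR1nn s hs ω
    nlinarith
  have hexpnn : ∀ s (ω : Ω), 0 < Real.exp (-θ * R1 s ω) := fun s ω => Real.exp_pos _
  have hexp_int : ∀ s : ℝ, 0 ≤ s → Integrable (fun ω => Real.exp (-θ * R1 s ω)) μ := by
    intro s hs
    refine Integrable.mono' (integrable_const 1) (hexpmeas s).aestronglyMeasurable
      (ae_of_all _ fun ω => ?_)
    rw [Real.norm_eq_abs, abs_of_pos (hexpnn s ω)]
    exact hexple1 s hs ω
  -- ∫ (1 - exp(-θ R1 s)) = 1 - g1 s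
  have hint_eq : ∀ s : ℝ, 0 ≤ s →
      ∫ ω, (1 - Real.exp (-θ * R1 s ω)) ∂μ = 1 - g1 s := by
    intro s hs
    rw [integral_sub (integrable_const 1) (hexp_int s hs), hg1]
    simp
  -- g1 s < 1 for s > 0
  have hg1lt : ∀ s : ℝ, 0 < s → g1 s < 1 := by
    intro s hs
    have hnn : (0:Ω → ℝ) ≤ fun ω => 1 - Real.exp (-θ * R1 s ω) := by
      intro ω
      simp only [Pi.zero_apply]
      linarith [hexple1 s hs.le ω]
    have hint : Integrable (fun ω => 1 - Real.exp (-θ * R1 s ω)) μ :=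
      (integrable_const 1).sub (hexp_int s hs.le)
    have hsupp : {ω | z2 ω < z1 ω} ⊆ Function.support (fun ω => 1 - Real.exp (-θ * R1 s ω)) := by
      intro ω hω
      have hδs : (0:ℝ) < δ * s := mul_pos hδ0 hs
      have hq0 : 0 ≤ δ * s * z2 ω := mul_nonneg hδs.le (hz2nn ω)
      have hQ : 1 < (1 + δ * s * z1 ω) / (1 + δ * s * z2 ω) := by
        rw [lt_div_iff₀ (by linarith)]
        have : δ * s * z2 ω < δ * s * z1 ω := by
          exact mul_lt_mul_of_pos_left hω hδs
        linarith
      have hR1p : 0 < R1 s ω := by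
        rw [hR1, if_pos (le_of_lt hω)]
        exact Real.logb_pos one_lt_two hQ
      have : Real.exp (-θ * R1 s ω) < 1 := by
        rw [Real.exp_lt_one_iff]
        nlinarith
      simp only [Function.mem_support]
      intro hcon
      nlinarith [this]
    have hμsupp : 0 < μ (Function.support (fun ω => 1 - Real.exp (-θ * R1 s ω))) :=
      lt_of_lt_of_le hS'pos (measure_mono hsupp)
    have h0 : 0 < ∫ ω, (1 - Real.exp (-θ * R1 s ω)) ∂μ :=
      (integral_pos_iff_support_of_nonneg hnn hint).mpr hμsupp
    rw [hint_eq s hs.le] at h0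
    linarith
  -- E > 0
  have hEpos : 0 < E := by
    have hnn : (0:Ω → ℝ) ≤ fun ω => if z2 ω ≤ z1 ω then z1 ω - z2 ω else 0 := by
      intro ω
      simp only [Pi.zero_apply]
      split_ifs with hc
      · linarith
      · exact le_refl _
    have hint : Integrable (fun ω => if z2 ω ≤ z1 ω then z1 ω - z2 ω else 0) μ := by
      refine Integrable.mono' (integrable_const M)
        ((Measurable.ite (measurableSet_le hz2m hz1m) (hz1m.sub hz2m)
          measurable_const).aestronglyMeasurable) (ae_of_all _ fun ω => ?_)
      rw [Real.norm_eq_abs, abs_of_nonneg (hnn ω)]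
      show (if z2 ω ≤ z1 ω then z1 ω - z2 ω else 0) ≤ M
      split_ifs with hc
      · linarith [hz1b ω, hz2nn ω]
      · exact hM0
    have hsupp : {ω | z2 ω < z1 ω} ⊆
        Function.support (fun ω => if z2 ω ≤ z1 ω then z1 ω - z2 ω else 0) := by
      intro ω hω
      have hω' : z2 ω < z1 ω := hω
      simp only [Function.mem_support, if_pos (le_of_lt hω')]
      intro hcon
      linarith
    have hμsupp : 0 < μ (Function.support (fun ω => if z2 ω ≤ z1 ω then z1 ω - z2 ω else 0)) :=
      lt_of_lt_of_le hS'pos (measure_mono hsupp)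
    exact (integral_pos_iff_support_of_nonneg hnn hint).mpr hμsupp
  -- Step A : (1 - g1 s)/s → θδE/log2 by dominated convergence
  have hDCT : Tendsto (fun s : ℝ => ∫ ω, ((1 - Real.exp (-θ * R1 s ω)) / s) ∂μ)
      (nhdsWithin 0 (Set.Ioi 0))
      (nhds (∫ ω, (θ * δ / Real.log 2 * (if z2 ω ≤ z1 ω then z1 ω - z2 ω else 0)) ∂μ)) := by
    refine tendsto_integral_filter_of_dominated_convergence
      (fun _ => θ * δ * M / Real.log 2) ?_ ?_ (integrable_const _) ?_
    · filter_upwards with s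
      exact ((measurable_const.sub (hexpmeas s)).div_const s).aestronglyMeasurable
    · filter_upwards [self_mem_nhdsWithin] with s hs
      refine ae_of_all _ fun ω => ?_
      have hs0 : (0:ℝ) < s := hs
      have h1 : 0 ≤ 1 - Real.exp (-θ * R1 s ω) := by
        linarith [hexple1 s hs0.le ω]
      have h2 : 1 - Real.exp (-θ * R1 s ω) ≤ θ * R1 s ω := by
        have := Real.add_one_le_exp (-θ * R1 s ω)
        linarith
      have h3 : θ * R1 s ω ≤ θ * (δ * s * M / Real.log 2) :=
        mul_le_mul_of_nonneg_left (hR1ub s hs0 ω) hθ.le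
      rw [Real.norm_eq_abs, abs_of_nonneg (div_nonneg h1 hs0.le), div_le_iff₀ hs0]
      calc 1 - Real.exp (-θ * R1 s ω) ≤ θ * (δ * s * M / Real.log 2) := le_trans h2 h3
        _ = θ * δ * M / Real.log 2 * s := by ring
    · refine ae_of_all _ fun ω => ?_
      by_cases hc : z2 ω ≤ z1 ω
      · simp only [hR1, if_pos hc]
        have := ptwise_aux δ θ (z1 ω) (z2 ω) hδ0 (hz2nn ω) hc
        have heq : θ * δ * (z1 ω - z2 ω) / Real.log 2
            = θ * δ / Real.log 2 * (z1 ω - z2 ω) := by ring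
        rw [heq] at this
        exact this
      · simp only [hR1, if_neg hc, mul_zero, Real.exp_zero, sub_self, zero_div]
        exact tendsto_const_nhds
  have hintF : ∀ s : ℝ, 0 < s →
      ∫ ω, ((1 - Real.exp (-θ * R1 s ω)) / s) ∂μ = (1 - g1 s) / s := by
    intro s hs
    rw [integral_div, hint_eq s hs.le]
  have hconstmul : ∫ ω, (θ * δ / Real.log 2 * (if z2 ω ≤ z1 ω then z1 ω - z2 ω else 0)) ∂μ
      = θ * δ / Real.log 2 * E := by
    rw [hE]
    exact integral_const_mul _ _
  have hA : Tendsto (fun s : ℝ => (1 - g1 s) / s) (nhdsWithin 0 (Set.Ioi 0))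
      (nhds (θ * δ / Real.log 2 * E)) := by
    rw [← hconstmul]
    refine hDCT.congr' ?_
    filter_upwards [self_mem_nhdsWithin] with s hs
    exact hintF s hs
  -- g1 → 1
  have hid0 : Tendsto (fun s : ℝ => s) (nhdsWithin 0 (Set.Ioi 0)) (nhds 0) :=
    tendsto_id.mono_left nhdsWithin_le_nhds
  have hg1to1 : Tendsto g1 (nhdsWithin 0 (Set.Ioi 0)) (nhds 1) := by
    have h1 : Tendsto (fun s : ℝ => 1 - (1 - g1 s) / s * s) (nhdsWithin 0 (Set.Ioi 0))
        (nhds (1 - θ * δ / Real.log 2 * E * 0)) :=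
      tendsto_const_nhds.sub (hA.mul hid0)
    rw [mul_zero, sub_zero] at h1
    refine h1.congr' ?_
    filter_upwards [self_mem_nhdsWithin] with s hs
    have hs0 : (0:ℝ) < s := hs
    rw [div_mul_cancel₀ _ (ne_of_gt hs0)]
    ring
  have hg1Iio : Tendsto g1 (nhdsWithin 0 (Set.Ioi 0)) (nhdsWithin 1 (Set.Iio 1)) := by
    rw [tendsto_nhdsWithin_iff]
    refine ⟨hg1to1, ?_⟩
    filter_upwards [self_mem_nhdsWithin] with s hs
    exact hg1lt s hs
  -- Step C composed
  have hC : Tendsto (fun s : ℝ => Real.log ((1 - p11 * g1 s) /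
      ((1 - p11 - p22) * (g1 s) ^ 2 + p22 * g1 s)) / (1 - g1 s))
      (nhdsWithin 0 (Set.Ioi 0)) (nhds ((2 - p11 - p22) / (1 - p11))) :=
    (hslope_aux p11 p22 hp11 hp22).comp hg1Iio
  -- ravg s / s limit
  have hp111 : p11 < 1 := hp11.2
  have hp221 : p22 < 1 := hp22.2
  have h2p : (0:ℝ) < 2 - p11 - p22 := by linarith
  have h1p : (0:ℝ) < 1 - p11 := by linarith
  set L : ℝ := θ * δ * E / ((Real.exp θ - 1) * Real.log 2) with hL
  have hLpos : 0 < L := by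
    rw [hL]
    apply div_pos (by positivity) (by positivity)
  have hB2 : Tendsto (fun s : ℝ => ravg s / s) (nhdsWithin 0 (Set.Ioi 0)) (nhds L) := by
    have hval : Pon / (Real.exp θ - 1) * ((2 - p11 - p22) / (1 - p11))
        * (θ * δ / Real.log 2 * E) = L := by
      rw [hL, hPon]
      field_simp
    have h1 : Tendsto (fun s : ℝ => Pon / (Real.exp θ - 1) *
        (Real.log ((1 - p11 * g1 s) / ((1 - p11 - p22) * (g1 s) ^ 2 + p22 * g1 s)) / (1 - g1 s))
        * ((1 - g1 s) / s)) (nhdsWithin 0 (Set.Ioi 0))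
        (nhds (Pon / (Real.exp θ - 1) * ((2 - p11 - p22) / (1 - p11))
          * (θ * δ / Real.log 2 * E))) :=
      (tendsto_const_nhds.mul hC).mul hA
    rw [hval] at h1
    refine h1.congr' ?_
    filter_upwards [self_mem_nhdsWithin] with s hs
    have hs0 : (0:ℝ) < s := hs
    have hg1ne : 1 - g1 s ≠ 0 := ne_of_gt (sub_pos.mpr (hg1lt s hs0))
    rw [hravg]
    field_simp
  refine ⟨?_, ?_, ?_, strict_mono_aux⟩
  · -- the main limit
    have hfin : Tendsto (fun s : ℝ => (δ * P) / (ravg s / s)) (nhdsWithin 0 (Set.Ioi 0))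
        (nhds ((δ * P) / L)) :=
      tendsto_const_nhds.div hB2 (ne_of_gt hLpos)
    have heq2 : (δ * P) / L = (Real.exp θ - 1) * P * Real.log 2 / (θ * E) := by
      rw [hL]
      rw [div_div_eq_mul_div, div_eq_div_iff (by positivity) (by positivity)]
      ring
    rw [heq2] at hfin
    refine hfin.congr (fun s => ?_)
    rw [div_div_eq_mul_div]
  · rw [div_mul_div_comm]
    ring_nf
  · rw [lt_div_iff₀ hθ]
    have := Real.add_one_lt_exp (ne_of_gt hθ)
    linarith
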